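/- arXiv:1702.05754 — 2 statements merged into one kernel-verified Lean document; each statement's English description precedes it below -/
import Mathlib

section
/- If F is the Fitting subgroup of a finite soluble group G with G nontrivial, then F is nontrivial and the centralizer of F in G is contained in F. -/
/-- If `⁅H,H⁆ ≤ K` and every element of `K` commutes with every element of `H`,
then `H` is nilpotent (of class at most 2). -/
lemma aux_nilpotent_of_commutator_centralized {G : Type*} [Group G] (H K : Subgroup G)
    (h1 : ⁅H, H⁆ ≤ K) (h2 : ∀ x ∈ K, ∀ y ∈ H, x * y = y * x) :
    Group.IsNilpotent ↥H := by
  rw [Subgroup.nilpotent_iff_lowerCentralSeries]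
  refine ⟨2, ?_⟩
  have hc : (⊤ : Subgroup ↥H).lowerCentralSeries 1 ≤ Subgroup.center ↥H := by
    rw [Subgroup.top_lowerCentralSeries_one, commutator_def]
    intro x hx
    have hxG : (x : G) ∈ ⁅H, H⁆ := by
      have hmap : Subgroup.map H.subtype ⁅(⊤ : Subgroup ↥H), (⊤ : Subgroup ↥H)⁆ = ⁅H, H⁆ := by
        rw [Subgroup.map_commutator]
        congr 1 <;> rw [← MonoidHom.range_eq_map, Subgroup.range_subtype]
      rw [← hmap]
      exact ⟨x, hx, rfl⟩
    rw [Subgroup.mem_center_iff]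
    intro y
    exact Subtype.ext (h2 (x : G) (h1 hxG) (y : G) y.2).symm
  exact Subgroup.lowerCentralSeries_succ_eq_bot ⊤ hc

/-- Iterated commutator series of a subgroup, as subgroups of the ambient group. -/
def auxDerived {G : Type*} [Group G] (C : Subgroup G) : ℕ → Subgroup G
  | 0 => C
  | n + 1 => ⁅auxDerived C n, auxDerived C n⁆

/-- If F is the Fitting subgroup of a finite soluble group G (G nontrivial),
i.e. the largest nilpotent normal subgroup of G, then F is nontrivial and
the centralizer of F in G is contained in F. -/
theorem fitting_nontrivial_self_centralizing
    {G : Type*} [Group G] [Finite G] [Nontrivial G] [Group.IsSolvable G]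
    (F : Subgroup G) (hFnormal : F.Normal) (hFnilp : Group.IsNilpotent F)
    (hFmax : ∀ N : Subgroup G, N.Normal → Group.IsNilpotent N → N ≤ F) :
    F ≠ ⊥ ∧ Subgroup.centralizer (F : Set G) ≤ F := by
  classical
  have hsol : ∃ n, derivedSeries G n = ⊥ := Group.IsSolvable.solvable
  constructor
  · -- F is nontrivial
    set n := Nat.find hsol with hn
    have hnspec : derivedSeries G n = ⊥ := Nat.find_spec hsol
    have hn0 : n ≠ 0 := by
      intro h
      rw [h, derivedSeries_zero] at hnspec
      exact top_ne_bot hnspec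
    obtain ⟨m, hm⟩ := Nat.exists_eq_succ_of_ne_zero hn0
    have hA : derivedSeries G m ≠ ⊥ := Nat.find_min hsol (by omega)
    have hAA : ⁅derivedSeries G m, derivedSeries G m⁆ = ⊥ := by
      rw [← derivedSeries_succ]
      rw [hm] at hnspec
      exact hnspec
    have hAnilp : Group.IsNilpotent ↥(derivedSeries G m) := by
      refine aux_nilpotent_of_commutator_centralized _ ⊥ hAA.le ?_
      intro x hx y _
      rw [Subgroup.mem_bot] at hx
      rw [hx, one_mul, mul_one]
    have hAF : derivedSeries G m ≤ F := hFmax _ (derivedSeries_normal G m) hAnilp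
    intro hFbot
    exact hA (le_bot_iff.mp (hFbot ▸ hAF))
  · -- centralizer of F is contained in F
    set C := Subgroup.centralizer (F : Set G) with hC
    have hCn : C.Normal := by
      constructor
      intro c hc g
      rw [Subgroup.mem_centralizer_iff]
      intro f hf
      have hf' : g⁻¹ * f * g ∈ F := by
        have := hFnormal.conj_mem f hf g⁻¹
        rwa [inv_inv] at this
      have hcomm : (g⁻¹ * f * g) * c = c * (g⁻¹ * f * g) :=
        Subgroup.mem_centralizer_iff.mp hc _ hf'
      calc f * (g * c * g⁻¹) = g * ((g⁻¹ * f * g) * c) * g⁻¹ := by group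
        _ = g * (c * (g⁻¹ * f * g)) * g⁻¹ := by rw [hcomm]
        _ = (g * c * g⁻¹) * f := by group
    set Z := C ⊓ F with hZ
    -- the derived series of C, as subgroups of G
    set D : ℕ → Subgroup G := auxDerived C with hD
    have hDsucc : ∀ n, D (n + 1) = ⁅D n, D n⁆ := fun n => rfl
    have hDnormal : ∀ n, (D n).Normal := by
      intro n
      induction n with
      | zero => exact hCn
      | succ k ih => exact @Subgroup.commutator_normal _ _ (D k) (D k) ih ih
    have hDleC : ∀ n, D n ≤ C := by
      intro n
      induction n with
      | zero => exact le_rfl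
      | succ k ih =>
        refine le_trans ?_ ih
        rw [hDsucc]
        exact Subgroup.commutator_le.mpr fun g₁ h₁ g₂ h₂ => by
          exact Subgroup.mul_mem _ (Subgroup.mul_mem _ (Subgroup.mul_mem _ h₁ h₂)
            (Subgroup.inv_mem _ h₁)) (Subgroup.inv_mem _ h₂)
    have hDle : ∀ n, D n ≤ derivedSeries G n := by
      intro n
      induction n with
      | zero => exact le_top
      | succ k ih =>
        rw [hDsucc, derivedSeries_succ]
        exact Subgroup.commutator_mono ih ih
    obtain ⟨N, hN⟩ := hsol
    have hex : ∃ n, D n ≤ Z := ⟨N, (hDle N).trans (hN.le.trans bot_le)⟩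
    obtain ⟨k, hkspec, hkmin⟩ : ∃ k, D k ≤ Z ∧ ∀ j < k, ¬ D j ≤ Z :=
      ⟨@Nat.find _ (Classical.decPred _) hex, @Nat.find_spec _ (Classical.decPred _) hex,
        fun j hj => @Nat.find_min _ (Classical.decPred _) hex _ hj⟩
    by_cases hk0 : k = 0
    · rw [hk0] at hkspec
      exact le_trans hkspec inf_le_right
    · exfalso
      obtain ⟨m, hm⟩ := Nat.exists_eq_succ_of_ne_zero hk0
      have hE : ¬ D m ≤ Z := hkmin m (by omega)
      have hEE : ⁅D m, D m⁆ ≤ Z := by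
        rw [← hDsucc]
        rw [hm] at hkspec
        exact hkspec
      have hEnilp : Group.IsNilpotent ↥(D m) := by
        refine aux_nilpotent_of_commutator_centralized (D m) Z hEE ?_
        intro x hx y hy
        have hxF : x ∈ F := hx.2
        have hyC : y ∈ C := hDleC m hy
        exact Subgroup.mem_centralizer_iff.mp hyC x hxF
      have hEF : D m ≤ F := hFmax (D m) (hDnormal m) hEnilp
      exact hE (le_inf (hDleC m) hEF)
end

section
/- If M is a finite soluble group whose order divides 80 and whose largest normal 2-subgroup O₂(M) is trivial, then M embeds into a group of the form Z₅ : Z₄ (i.e., |M| divides 20 and M has a normal Sylow 5-subgroup), and Aut(M) is soluble. -/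
private lemma mulAut_comm_of_isCyclic {G : Type*} [Group G] [IsCyclic G]
    (φ ψ : MulAut G) : φ * ψ = ψ * φ := by
  obtain ⟨g, hg⟩ := IsCyclic.exists_generator (α := G)
  obtain ⟨m, hm⟩ := Subgroup.mem_zpowers_iff.mp (hg (φ g))
  obtain ⟨k, hk⟩ := Subgroup.mem_zpowers_iff.mp (hg (ψ g))
  have key : φ (ψ g) = ψ (φ g) := by
    rw [← hk, ← hm, map_zpow, map_zpow, ← hm, ← hk, ← zpow_mul, ← zpow_mul, mul_comm]
  ext x
  obtain ⟨n, rfl⟩ := Subgroup.mem_zpowers_iff.mp (hg x)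
  simp only [MulAut.mul_apply, map_zpow, key]

private def mulAutMultiplicative (A : Type*) [AddGroup A] :
    MulAut (Multiplicative A) ≃* Multiplicative (AddAut A) :=
  MulAutMultiplicative A

/-- If `M` is a finite soluble group whose order divides `80` and whose largest
normal `2`-subgroup is trivial (every normal `2`-subgroup is trivial), then
`|M|` divides `20`, `M` has a normal Sylow `5`-subgroup (so `M` embeds into a
group of shape `Z₅ : Z₄`), and `Aut(M)` is soluble. -/
theorem order_dvd_eighty_trivial_O2
    {M : Type*} [Group M] [Finite M] [Group.IsSolvable M]
    (hord : Nat.card M ∣ 80)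
    (hO2 : ∀ P : Subgroup M, P.Normal → IsPGroup 2 P → P = ⊥) :
    Nat.card M ∣ 20 ∧ (∃ P : Sylow 5 M, (P : Subgroup M).Normal) ∧
      IsSolvable (MulAut M) := by
  haveI fact5 : Fact (Nat.Prime 5) := ⟨by norm_num⟩
  haveI fact2 : Fact (Nat.Prime 2) := ⟨Nat.prime_two⟩
  by_cases h5 : 5 ∣ Nat.card M
  case neg =>
    -- `M` is a 2-group, hence trivial by `hO2`
    have hcop : (Nat.card M).Coprime 5 :=
      Nat.coprime_comm.mp ((Nat.Prime.coprime_iff_not_dvd (by norm_num)).mpr h5)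
    have h16 : Nat.card M ∣ 16 :=
      hcop.dvd_of_dvd_mul_right (by rw [show 16 * 5 = 80 from rfl]; exact hord)
    obtain ⟨k, -, hk⟩ := (Nat.dvd_prime_pow Nat.prime_two).mp
      (by simpa using h16 : Nat.card M ∣ 2 ^ 4)
    have htop : (⊤ : Subgroup M) = ⊥ := by
      refine hO2 ⊤ inferInstance (IsPGroup.of_card (n := k) ?_)
      rw [← hk, Subgroup.card_top]
    haveI : Subsingleton M := by
      constructor
      intro a b
      have ha : a ∈ (⊥ : Subgroup M) := htop ▸ Subgroup.mem_top a
      have hb : b ∈ (⊥ : Subgroup M) := htop ▸ Subgroup.mem_top b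
      rw [Subgroup.mem_bot.mp ha, Subgroup.mem_bot.mp hb]
    have hcard1 : Nat.card M = 1 := Nat.card_eq_one_iff_unique.mpr ⟨inferInstance, ⟨1⟩⟩
    refine ⟨by rw [hcard1]; exact one_dvd _, ⟨default, ?_⟩, ?_⟩
    · constructor
      intro a ha b
      simpa [Subsingleton.elim (b * a * b⁻¹) a] using ha
    · exact isSolvable_of_comm fun a b => by ext x; exact Subsingleton.elim _ _
  case pos =>
  obtain ⟨P⟩ : Nonempty (Sylow 5 M) := Sylow.nonempty
  have hM0 : Nat.card M ≠ 0 := Nat.card_pos.ne'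
  have hv : (Nat.card M).factorization 5 = 1 := by
    have h1 : 1 ≤ (Nat.card M).factorization 5 :=
      (Nat.Prime.dvd_iff_one_le_factorization (by norm_num) hM0).mp h5
    by_contra h
    have h2 : 2 ≤ (Nat.card M).factorization 5 := by omega
    have h25 : (5:ℕ) ^ 2 ∣ Nat.card M :=
      (Nat.Prime.pow_dvd_iff_le_factorization (by norm_num) hM0).mpr h2
    have : (25:ℕ) ∣ 80 := dvd_trans (by norm_num at h25 ⊢; exact h25) hord
    norm_num at this
  have hcardP : Nat.card ↥(P : Subgroup M) = 5 := by
    rw [P.card_eq_multiplicity, hv, pow_one]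
  haveI hcyc : IsCyclic ↥(P : Subgroup M) := isCyclic_of_prime_card hcardP
  have hPmulidx := Subgroup.card_mul_index (P : Subgroup M)
  have hPidx : (P : Subgroup M).index ∣ 16 := by
    have h80 : 5 * (P : Subgroup M).index ∣ 5 * 16 := by
      have : 5 * (P : Subgroup M).index = Nat.card M := by
        have h := hPmulidx; rw [hcardP] at h; exact h
      rw [this, show 5 * 16 = 80 from rfl]
      exact hord
    exact (mul_dvd_mul_iff_left (by norm_num : (5:ℕ) ≠ 0)).mp h80
  -- the number of Sylow 5-subgroups is 1 or 16
  have hn5dvd : Nat.card (Sylow 5 M) ∣ 16 := (Sylow.card_dvd_index P).trans hPidx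
  have hn5mod : Nat.card (Sylow 5 M) % 5 = 1 % 5 := card_sylow_modEq_one 5 M
  have hn5 : Nat.card (Sylow 5 M) = 1 ∨ Nat.card (Sylow 5 M) = 16 := by
    have h1 : Nat.card (Sylow 5 M) ≤ 16 := Nat.le_of_dvd (by norm_num) hn5dvd
    interval_cases h : Nat.card (Sylow 5 M) <;> omega
  -- rule out 16 via Burnside's normal p-complement theorem
  have hnorm : (P : Subgroup M).Normal := by
    rcases hn5 with hn5 | hn5
    · rw [← Subgroup.normalizer_eq_top_iff, ← Subgroup.index_eq_one]
      exact (Sylow.card_eq_index_normalizer P).symm.trans hn5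
    · exfalso
      have hidx16 : (P : Subgroup M).index = 16 :=
        Nat.dvd_antisymm hPidx (hn5 ▸ Sylow.card_dvd_index P)
      have hcardM : Nat.card M = 80 := by
        have h := hPmulidx; rw [hcardP, hidx16] at h; omega
      have hnormidx : (Subgroup.normalizer ((P : Subgroup M) : Set M)).index = 16 := by
        exact (Sylow.card_eq_index_normalizer P).symm.trans hn5
      have hnormcard : Nat.card ↥(Subgroup.normalizer ((P : Subgroup M) : Set M)) = 5 := by
        have := Subgroup.card_mul_index (Subgroup.normalizer ((P : Subgroup M) : Set M))
        rw [hnormidx, hcardM] at this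
        omega
      have heq : (P : Subgroup M) = Subgroup.normalizer ((P : Subgroup M) : Set M) :=
        Subgroup.eq_of_le_of_card_ge Subgroup.le_normalizer
          (by rw [hcardP, hnormcard])
      letI := IsCyclic.commGroup (α := ↥(P : Subgroup M))
      have hNC : Subgroup.normalizer ((P : Subgroup M) : Set M) ≤
          Subgroup.centralizer ((P : Subgroup M) : Set M) := by
        rw [← heq]
        intro x hx
        rw [Subgroup.mem_centralizer_iff]
        intro y hy
        exact congrArg Subtype.val
          (mul_comm (⟨y, hy⟩ : ↥(P : Subgroup M)) ⟨x, hx⟩)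
      have hcomp := MonoidHom.ker_transferSylow_isComplement' P hNC
      have hmul := hcomp.card_mul
      rw [hcardP, hcardM] at hmul
      have hker2 : IsPGroup 2 (MonoidHom.transferSylow P hNC).ker :=
        IsPGroup.of_card (n := 4) (by omega)
      have := hO2 _ (MonoidHom.normal_ker _) hker2
      rw [this, Subgroup.card_bot] at hmul
      omega
  -- the centralizer of `P` equals `P`
  haveI := hnorm
  haveI hchar : (P : Subgroup M).Characteristic := P.characteristic_of_normal hnorm
  set C : Subgroup M := Subgroup.centralizer ((P : Subgroup M) : Set M) with hCdef
  haveI hCchar : C.Characteristic := inferInstance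
  letI := IsCyclic.commGroup (α := ↥(P : Subgroup M))
  have hcommP : ∀ a ∈ (P : Subgroup M), ∀ b ∈ (P : Subgroup M), a * b = b * a :=
    fun a ha b hb => congrArg Subtype.val
      (mul_comm (⟨a, ha⟩ : ↥(P : Subgroup M)) ⟨b, hb⟩)
  have hPC : (P : Subgroup M) ≤ C := by
    intro p hp
    rw [hCdef, Subgroup.mem_centralizer_iff]
    intro q hq
    exact hcommP q hq p hp
  have hCcard5 : Nat.card ↥C = 5 := by
    have hCdvd : Nat.card ↥C ∣ 80 := (Subgroup.card_subgroup_dvd_card C).trans hord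
    have hC0 : Nat.card ↥C ≠ 0 := Nat.card_pos.ne'
    -- `P` (viewed inside `C`) is central in `C`
    set P2 : Subgroup ↥C := (P : Subgroup M).subgroupOf C with hP2def
    have hP2card : Nat.card ↥P2 = 5 := by
      rw [Nat.card_congr (Subgroup.subgroupOfEquivOfLe hPC).toEquiv]
      exact hcardP
    have hP2center : P2 ≤ Subgroup.center ↥C := by
      intro x hx
      rw [Subgroup.mem_center_iff]
      intro y
      have hy : ∀ h ∈ (((P : Subgroup M) : Subgroup M) : Set M),
          h * (y : M) = (y : M) * h := Subgroup.mem_centralizer_iff.mp y.2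
      exact Subtype.ext (hy (x : M) hx).symm
    haveI hP2norm : P2.Normal := by
      constructor
      intro a ha b
      have h := Subgroup.mem_center_iff.mp (hP2center ha) b
      have : b * a * b⁻¹ = a := by rw [h, mul_inv_cancel_right]
      rw [this]; exact ha
    -- `C` is nilpotent
    have hq16 : Nat.card (↥C ⧸ P2) ∣ 16 := by
      have h1 := Subgroup.card_mul_index P2
      rw [hP2card, Subgroup.index_eq_card] at h1
      have h2 : 5 * Nat.card (↥C ⧸ P2) ∣ 5 * 16 := by
        rw [h1, show 5 * 16 = 80 from rfl]; exact hCdvd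
      exact (mul_dvd_mul_iff_left (by norm_num : (5:ℕ) ≠ 0)).mp h2
    obtain ⟨k, -, hk⟩ := (Nat.dvd_prime_pow Nat.prime_two).mp
      (by simpa using hq16 : Nat.card (↥C ⧸ P2) ∣ 2 ^ 4)
    have hnil : Group.IsNilpotent ↥C := by
      refine @isNilpotent_of_ker_le_center _ _ _ _ (QuotientGroup.mk' P2) ?_ ?_
      · rw [QuotientGroup.ker_mk']; exact hP2center
      · exact (IsPGroup.of_card hk).isNilpotent
    -- the Sylow 2-subgroup of `C` is normal in `C`, hence in `M`, hence trivial
    obtain ⟨S⟩ : Nonempty (Sylow 2 ↥C) := Sylow.nonempty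
    have hSnorm : (S : Subgroup ↥C).Normal :=
      (((isNilpotent_of_finite_tfae (G := ↥C)).out 0 3 rfl rfl).mp hnil) 2 fact2 S
    haveI := hSnorm
    haveI := S.characteristic_of_normal hSnorm
    have hSbot : (S : Subgroup ↥C).map C.subtype = ⊥ :=
      hO2 _ inferInstance (S.2.map C.subtype)
    have hS1 : (S : Subgroup ↥C) = ⊥ := by
      rw [Subgroup.map_eq_bot_iff, Subgroup.ker_subtype] at hSbot
      exact le_bot_iff.mp hSbot
    -- so `C` has odd order
    have h2C : ¬ 2 ∣ Nat.card ↥C := by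
      intro h
      have hf : 1 ≤ (Nat.card ↥C).factorization 2 :=
        (Nat.Prime.dvd_iff_one_le_factorization Nat.prime_two hC0).mp h
      have hoc := S.card_eq_multiplicity
      rw [hS1, Subgroup.card_bot] at hoc
      have : 2 ^ 1 ≤ 2 ^ (Nat.card ↥C).factorization 2 :=
        Nat.pow_le_pow_right (by norm_num) hf
      omega
    have hcop : (Nat.card ↥C).Coprime 16 := by
      have h1 : Nat.Coprime 2 (Nat.card ↥C) :=
        (Nat.Prime.coprime_iff_not_dvd Nat.prime_two).mpr h2C
      have := Nat.Coprime.pow_left 4 h1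
      exact (Nat.coprime_comm.mp (by norm_num at this ⊢; exact this))
    have hC5 : Nat.card ↥C ∣ 5 := by
      refine hcop.dvd_of_dvd_mul_right ?_
      rw [show 5 * 16 = 80 from rfl]
      exact hCdvd
    refine Nat.dvd_antisymm hC5 ?_
    rw [← hcardP]
    exact Subgroup.card_dvd_of_le hPC
  have hPeqC : (P : Subgroup M) = C :=
    Subgroup.eq_of_le_of_card_ge hPC (by rw [hCcard5, hcardP])
  -- conjugation gives an injection of `M ⧸ C` into `Aut(P)`
  set f : M →* MulAut ↥(P : Subgroup M) := MulAut.conjNormal with hfdef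
  have hkerf : f.ker = C := by
    ext g
    constructor
    · intro h
      rw [Subgroup.mem_centralizer_iff]
      intro y hy
      have h1 : f g ⟨y, hy⟩ = ⟨y, hy⟩ := by
        rw [MonoidHom.mem_ker.mp h]; rfl
      have h2 : g * y * g⁻¹ = y := congrArg Subtype.val h1
      have h3 := congrArg (· * g) h2
      simp only [inv_mul_cancel_right] at h3
      exact h3.symm
    · intro h
      have h' : ∀ y ∈ ((P : Subgroup M) : Set M), y * g = g * y :=
        Subgroup.mem_centralizer_iff.mp h
      rw [MonoidHom.mem_ker]
      ext x
      have := (h' (x : M) x.2).symm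
      show g * (x : M) * g⁻¹ = x
      rw [this]; group
  have hcardAut : Nat.card (MulAut ↥(P : Subgroup M)) = 4 := by
    rw [IsCyclic.card_mulAut, hcardP]
    rfl
  have hidxC : C.index ∣ 4 := by
    have h1 : Nat.card (M ⧸ f.ker) ∣ Nat.card (MulAut ↥(P : Subgroup M)) := by
      rw [Nat.card_congr (QuotientGroup.quotientKerEquivRange f).toEquiv]
      exact Subgroup.card_subgroup_dvd_card _
    rw [hkerf, hcardAut] at h1
    rw [Subgroup.index_eq_card]
    exact h1
  have hdvd20 : Nat.card M ∣ 20 := by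
    have h := Subgroup.card_mul_index C
    rw [hCcard5] at h
    rw [← h, show (20:ℕ) = 5 * 4 from rfl]
    exact mul_dvd_mul_left 5 hidxC
  -- the quotient `M ⧸ P` is cyclic
  haveI hcycAut : IsCyclic (MulAut ↥(P : Subgroup M)) := by
    have e1 : Multiplicative (ZMod (Nat.card ↥(P : Subgroup M))) ≃* ↥(P : Subgroup M) :=
      zmodCyclicMulEquiv hcyc
    have e2 : MulAut ↥(P : Subgroup M) ≃* (ZMod (Nat.card ↥(P : Subgroup M)))ˣ :=
      (MulAut.congr e1.symm).trans
        ((mulAutMultiplicative _).trans (ZMod.AddAutEquivUnits _).toMultiplicative)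
    haveI : IsCyclic ((ZMod (Nat.card ↥(P : Subgroup M)))ˣ) := by
      rw [hcardP]
      infer_instance
    exact isCyclic_of_surjective e2.symm e2.symm.surjective
  haveI hMqcyc : IsCyclic (M ⧸ (P : Subgroup M)) := by
    have e : (M ⧸ (P : Subgroup M)) ≃* f.range :=
      (QuotientGroup.quotientMulEquivOfEq (hPeqC.trans hkerf.symm)).trans
        (QuotientGroup.quotientKerEquivRange f)
    exact isCyclic_of_surjective e.symm e.symm.surjective
  -- set up restriction and quotient homomorphisms on `Aut(M)`
  have hmap : ∀ φ : MulAut M,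
      (P : Subgroup M).map φ.toMonoidHom = (P : Subgroup M) :=
    fun φ => Subgroup.characteristic_iff_map_eq.mp hchar φ
  let r : MulAut M →* MulAut ↥(P : Subgroup M) :=
    { toFun := fun φ => (φ.subgroupMap (P : Subgroup M)).trans
        (MulEquiv.subgroupCongr (hmap φ))
      map_one' := by ext x; rfl
      map_mul' := by intro φ ψ; ext x; rfl }
  let q : MulAut M →* MulAut (M ⧸ (P : Subgroup M)) :=
    { toFun := fun φ => QuotientGroup.congr (P : Subgroup M) (P : Subgroup M) φ (hmap φ)
      map_one' := by
        apply MulEquiv.ext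
        intro x
        induction x using QuotientGroup.induction_on with
        | H z => rfl
      map_mul' := by
        intro φ ψ
        apply MulEquiv.ext
        intro x
        induction x using QuotientGroup.induction_on with
        | H z => rfl }
  haveI hsolvQ : Group.IsSolvable (MulAut (M ⧸ (P : Subgroup M))) :=
    isSolvable_of_comm mulAut_comm_of_isCyclic
  haveI hsolvP : Group.IsSolvable (MulAut ↥(P : Subgroup M)) :=
    isSolvable_of_comm mulAut_comm_of_isCyclic
  set r' : ↥q.ker →* MulAut ↥(P : Subgroup M) := r.comp q.ker.subtype with hr'def
  have hrapp : ∀ (φ : MulAut M) (x : M) (hx : x ∈ (P : Subgroup M)),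
      (((r φ) ⟨x, hx⟩ : ↥(P : Subgroup M)) : M) = φ x := fun _ _ _ => rfl
  have hqapp : ∀ (φ : MulAut M) (z : M),
      (q φ) (QuotientGroup.mk z) = QuotientGroup.mk (φ z) := fun _ _ => rfl
  haveI : Group.IsSolvable ↥r'.ker := by
    apply isSolvable_of_comm
    intro a b
    obtain ⟨⟨φ, hφq⟩, hφr⟩ := a
    obtain ⟨⟨ψ, hψq⟩, hψr⟩ := b
    apply Subtype.ext
    apply Subtype.ext
    show φ * ψ = ψ * φ
    have hfixφ : ∀ x ∈ (P : Subgroup M), φ x = x := by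
      intro x hx
      have h1 : r' ⟨φ, hφq⟩ = 1 := MonoidHom.mem_ker.mp hφr
      have h2 := MulEquiv.ext_iff.mp h1 ⟨x, hx⟩
      exact congrArg Subtype.val h2
    have hfixψ : ∀ x ∈ (P : Subgroup M), ψ x = x := by
      intro x hx
      have h1 : r' ⟨ψ, hψq⟩ = 1 := MonoidHom.mem_ker.mp hψr
      have h2 := MulEquiv.ext_iff.mp h1 ⟨x, hx⟩
      exact congrArg Subtype.val h2
    have hquotφ : ∀ z : M, z⁻¹ * φ z ∈ (P : Subgroup M) := by
      intro z
      have h1 : q φ = 1 := MonoidHom.mem_ker.mp hφq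
      have h2 := MulEquiv.ext_iff.mp h1 (QuotientGroup.mk z)
      rw [hqapp φ z] at h2
      exact QuotientGroup.eq.mp h2.symm
    have hquotψ : ∀ z : M, z⁻¹ * ψ z ∈ (P : Subgroup M) := by
      intro z
      have h1 : q ψ = 1 := MonoidHom.mem_ker.mp hψq
      have h2 := MulEquiv.ext_iff.mp h1 (QuotientGroup.mk z)
      rw [hqapp ψ z] at h2
      exact QuotientGroup.eq.mp h2.symm
    apply MulEquiv.ext
    intro m
    show φ (ψ m) = ψ (φ m)
    have hu := hquotψ m
    have hv := hquotφ m
    have hψm : ψ m = m * (m⁻¹ * ψ m) := by group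
    have hφm : φ m = m * (m⁻¹ * φ m) := by group
    have l1 : φ (ψ m) = m * (m⁻¹ * φ m) * (m⁻¹ * ψ m) := by
      conv_lhs => rw [hψm]
      rw [map_mul, hfixφ _ hu]
      conv_lhs => rw [hφm]
    have l2 : ψ (φ m) = m * (m⁻¹ * ψ m) * (m⁻¹ * φ m) := by
      conv_lhs => rw [hφm]
      rw [map_mul, hfixψ _ hv]
      conv_lhs => rw [hψm]
    rw [l1, l2]
    calc m * (m⁻¹ * φ m) * (m⁻¹ * ψ m)
        = m * ((m⁻¹ * φ m) * (m⁻¹ * ψ m)) := mul_assoc _ _ _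
      _ = m * ((m⁻¹ * ψ m) * (m⁻¹ * φ m)) := by rw [hcommP _ hv _ hu]
      _ = m * (m⁻¹ * ψ m) * (m⁻¹ * φ m) := (mul_assoc _ _ _).symm
  haveI : Group.IsSolvable ↥q.ker :=
    solvable_of_ker_le_range r'.ker.subtype r' (by rw [Subgroup.range_subtype])
  refine ⟨hdvd20, ⟨P, hnorm⟩, ?_⟩
  exact solvable_of_ker_le_range q.ker.subtype q (by rw [Subgroup.range_subtype])
end
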